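/- For n ≥ 2 and 1 ≤ k ≤ n: m_k(0, 1/n, 2/n, ..., (n-1)/n) = (1/n^k)·{n+k-1 brace n-1}, where {· brace ·} denotes the Stirling numbers of the second kind. -/

import Mathlib

open Finset

/-- Stirling numbers of the second kind. -/
def stirling2 : ℕ → ℕ → ℕ
  | 0, 0 => 1
  | 0, _ + 1 => 0
  | _ + 1, 0 => 0
  | n + 1, k + 1 => (k + 1) * stirling2 n (k + 1) + stirling2 n k

lemma stirling2_eq_zero : ∀ {n k : ℕ}, n < k → stirling2 n k = 0 := by
  intro n
  induction n with
  | zero => intro k h; cases k with | zero => omega | succ k => rfl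
  | succ n ih =>
    intro k h
    cases k with
    | zero => omega
    | succ k => simp [stirling2, ih (show n < k + 1 by omega), ih (show n < k by omega)]

lemma stirling2_self (m : ℕ) : stirling2 m m = 1 := by
  induction m with
  | zero => rfl
  | succ m ih =>
    show (m + 1) * stirling2 m (m + 1) + stirling2 m m = 1
    rw [stirling2_eq_zero (by omega), ih]; omega

lemma split_lemma {α : Type*} [DecidableEq α] (f : α → ℚ) (s : Finset α) (a : α)
    (ha : a ∈ s) (k : ℕ) :
    ∑ μ ∈ s.sym (k+1), (μ.1.map f).prod
      = ∑ μ ∈ (s.erase a).sym (k+1), (μ.1.map f).prod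
        + f a * ∑ μ ∈ s.sym k, (μ.1.map f).prod := by
  classical
  rw [← Finset.sum_filter_add_sum_filter_not (s.sym (k+1)) (fun μ => a ∈ μ)]
  rw [add_comm]
  congr 1
  · congr 1
    ext μ
    simp only [mem_filter, mem_sym_iff, Finset.mem_erase]
    constructor
    · rintro ⟨h1, h2⟩ b hb
      exact ⟨fun hba => h2 (hba ▸ hb), h1 b hb⟩
    · intro h
      exact ⟨fun b hb => (h b hb).2, fun hmem => (h a hmem).1 rfl⟩
  · have himg : (s.sym (k+1)).filter (fun μ => a ∈ μ)
        = (s.sym k).image (fun μ => a ::ₛ μ) := by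
      ext μ
      simp only [mem_filter, mem_image, mem_sym_iff]
      constructor
      · rintro ⟨h1, h2⟩
        refine ⟨μ.erase a h2, fun b hb => h1 b ?_, Sym.cons_erase h2⟩
        have : b ∈ (μ.erase a h2 : Multiset α) := hb
        rw [Sym.coe_erase] at this
        exact Multiset.mem_of_mem_erase this
      · rintro ⟨ν, hν, rfl⟩
        constructor
        · intro b hb
          rcases Sym.mem_cons.1 hb with rfl | hb
          · exact ha
          · exact hν b hb
        · exact Sym.mem_cons_self a ν
    rw [himg, Finset.sum_image (fun x _ y _ h => (Sym.cons_inj_right a x y).1 h)]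
    rw [Finset.mul_sum]
    apply Finset.sum_congr rfl
    intro μ _
    simp [Sym.coe_cons]

lemma N_eq (k m : ℕ) :
    ∑ μ ∈ (Finset.Icc 1 m).sym k, (μ.1.map (fun i : ℕ => (i : ℚ))).prod
      = stirling2 (m + k) m := by
  induction k generalizing m with
  | zero =>
    rw [Finset.sym_zero, Finset.sum_singleton, Nat.add_zero, stirling2_self]
    rfl
  | succ k ihk =>
    induction m with
    | zero =>
      simp [show Finset.Icc 1 0 = (∅ : Finset ℕ) by rfl, Finset.sym_empty, stirling2]
    | succ m ihm =>
      have hmem : m + 1 ∈ Finset.Icc 1 (m+1) := by simp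
      have herase : (Finset.Icc 1 (m+1)).erase (m+1) = Finset.Icc 1 m := by
        ext x; simp [Finset.mem_erase, Finset.mem_Icc]
      rw [split_lemma _ _ (m+1) hmem k, herase, ihm, ihk]
      have : m + 1 + (k + 1) = (m + k + 1) + 1 := by omega
      rw [this]
      show _ = ((stirling2 ((m+k+1) + 1) (m + 1) : ℕ) : ℚ)
      rw [show stirling2 ((m+k+1) + 1) (m + 1)
            = (m + 1) * stirling2 (m+k+1) (m + 1) + stirling2 (m+k+1) m from rfl]
      push_cast
      rw [show m + 1 + k = m + k + 1 by omega]
      ring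

lemma transfer (n k : ℕ) :
    ∑ μ : Sym (Fin n) k, (μ.1.map (fun i : Fin n => ((i : ℕ) : ℚ))).prod
      = ∑ μ ∈ (Finset.range n).sym k, (μ.1.map (fun i : ℕ => (i : ℚ))).prod := by
  rw [← Finset.sym_univ (α := Fin n) k]
  refine Finset.sum_bij (fun μ _ => μ.map Fin.val) ?_ ?_ ?_ ?_
  · intro μ _
    rw [Finset.mem_sym_iff]
    intro a ha
    rw [Sym.mem_map] at ha
    obtain ⟨b, _, rfl⟩ := ha
    simp [b.isLt]
  · intro x _ y _ h
    exact Sym.map_injective Fin.val_injective k h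
  · intro ν hν
    have H : ∀ a ∈ ν.1, a < n := by
      intro a ha
      have := Finset.mem_sym_iff.1 hν a ha
      simpa using this
    refine ⟨⟨ν.1.pmap (fun a h => (⟨a, h⟩ : Fin n)) H, by simp [ν.2]⟩,
      Finset.mem_sym_iff.2 (fun a _ => Finset.mem_univ a), ?_⟩
    apply Sym.coe_injective
    show Multiset.map Fin.val (ν.1.pmap (fun a h => (⟨a, h⟩ : Fin n)) H) = ν.1
    rw [Multiset.map_pmap]
    simp [Multiset.pmap_eq_map]
  · intro μ _
    beta_reduce
    rw [show ((Sym.map Fin.val μ).1 : Multiset ℕ) = Multiset.map Fin.val μ.1 from rfl,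
      Multiset.map_map]
    rfl

/-- `m_k(0, 1/n, …, (n-1)/n) = {n+k-1 brace n-1} / n^k`. -/
theorem stmt4 (n k : ℕ) (hn : 2 ≤ n) (hk1 : 1 ≤ k) (hkn : k ≤ n) :
    ∑ μ : Sym (Fin n) k, (μ.1.map (fun i : Fin n => (i : ℚ) / n)).prod
      = (stirling2 (n + k - 1) (n - 1) : ℚ) / n ^ k := by
  have hn0 : (n : ℚ) ≠ 0 := by positivity
  have hstep : ∀ μ : Sym (Fin n) k,
      (μ.1.map (fun i : Fin n => (i : ℚ) / n)).prod
        = (μ.1.map (fun i : Fin n => ((i : ℕ) : ℚ))).prod / n ^ k := by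
    intro μ
    have : (fun i : Fin n => (i : ℚ) / n)
        = fun i : Fin n => ((i : ℕ) : ℚ) * (n : ℚ)⁻¹ := by
      funext i; rw [div_eq_mul_inv]
    rw [this, Multiset.prod_map_mul]
    simp [μ.2, div_eq_mul_inv, inv_pow]
  simp_rw [hstep]
  rw [← Finset.sum_div]
  congr 1
  rw [transfer n k]
  obtain ⟨k', rfl⟩ : ∃ k', k = k' + 1 := ⟨k - 1, by omega⟩
  have h0 : (0 : ℕ) ∈ Finset.range n := by simp; omega
  rw [split_lemma _ _ 0 h0 k']
  have herase : (Finset.range n).erase 0 = Finset.Icc 1 (n - 1) := by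
    ext x; simp [Finset.mem_erase, Finset.mem_Icc, Finset.mem_range]; omega
  rw [herase, N_eq]
  simp only [Nat.cast_zero, zero_mul, add_zero]
  congr 2
  omega
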